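/- Let P be a simple closed n-gon in ℝ² with n ≥ 4, and let a ∈ ℝ² \ P be a point such that every ray emanating from a meets P. Then a sees via ℝ² \ P two non-adjacent vertices of P, i.e., there are vertices c', c'' of P that are not endpoints of a common edge, with the open segments (a,c') and (a,c'') disjoint from P. -/

import Mathlib

open Set Metric

abbrev Plane := EuclideanSpace ℝ (Fin 2)

/-- The `i`-th edge of the closed polygon with vertex cycle `p`. -/
def polyEdge {n : ℕ} (p : ZMod n → Plane) (i : ZMod n) : Set Plane :=
  segment ℝ (p i) (p (i + 1))

/-- The union of the edges of the closed polygon with vertex cycle `p`. -/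
def polyBody {n : ℕ} (p : ZMod n → Plane) : Set Plane :=
  ⋃ i, polyEdge p i

/-- `p` is the vertex cycle of a simple closed `n`-gon: distinct vertices,
consecutive edges meet exactly in their common endpoint, non-consecutive edges
are disjoint. -/
structure IsSimplePolygon {n : ℕ} (p : ZMod n → Plane) : Prop where
  three_le : 3 ≤ n
  inj : Function.Injective p
  consec : ∀ i : ZMod n, polyEdge p i ∩ polyEdge p (i + 1) = {p (i + 1)}
  nonconsec : ∀ i j : ZMod n, j ≠ i → j ≠ i + 1 → i ≠ j + 1 →
    polyEdge p i ∩ polyEdge p j = ∅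

/-- The union of the bounded connected components of the complement of `P`
(the Jordan interior of `P`). -/
def intP (P : Set Plane) : Set Plane :=
  {x | x ∉ P ∧ Bornology.IsBounded (connectedComponentIn Pᶜ x)}

/-- The union of the unbounded connected components of the complement of `P`
(the Jordan exterior of `P`). -/
def extP (P : Set Plane) : Set Plane :=
  {x | x ∉ P ∧ ¬ Bornology.IsBounded (connectedComponentIn Pᶜ x)}

/-- There is a polygonal path of `k` segments from `a` to `b` inside `S`. -/
def PolyPath (S : Set Plane) (a b : Plane) (k : ℕ) : Prop :=
  ∃ x : Fin (k + 1) → Plane, x 0 = a ∧ x (Fin.last k) = b ∧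
    ∀ i : Fin k, segment ℝ (x i.castSucc) (x i.succ) ⊆ S

/-- The minimal number of segments of a polygonal path from `a` to `b` in `S`. -/
noncomputable def polyDist (S : Set Plane) (a b : Plane) : ℕ :=
  sInf {k | PolyPath S a b k}
set_option maxHeartbeats 1000000

lemma isCompact_seg (x y : Plane) : IsCompact (segment ℝ x y) := by
  rw [segment_eq_image ℝ x y]
  exact isCompact_Icc.image (by fun_prop)

lemma isClosed_body {n : ℕ} (p : ZMod n → Plane) [NeZero n] : IsClosed (polyBody p) :=
  isClosed_iUnion_of_finite (fun i => (isCompact_seg _ _).isClosed)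

noncomputable def hitP {n : ℕ} (p : ZMod n → Plane) (a u : Plane) : ℝ :=
  sInf {l : ℝ | 0 ≤ l ∧ a + l • u ∈ polyBody p}

section hit
variable {n : ℕ} [NeZero n] {p : ZMod n → Plane} {a u : Plane}

lemma hitP_mem (hray : ∃ l : ℝ, 0 ≤ l ∧ a + l • u ∈ polyBody p) : 0 ≤ hitP p a u ∧ a + hitP p a u • u ∈ polyBody p := by
  have hcl : IsClosed {l : ℝ | 0 ≤ l ∧ a + l • u ∈ polyBody p} := by
    have : {l : ℝ | 0 ≤ l ∧ a + l • u ∈ polyBody p}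
        = Ici 0 ∩ (fun l : ℝ => a + l • u) ⁻¹' polyBody p := rfl
    rw [this]
    exact isClosed_Ici.inter ((isClosed_body p).preimage (by fun_prop))
  exact hcl.csInf_mem hray ⟨0, fun x hx => hx.1⟩

lemma hitP_pos (hray : ∃ l : ℝ, 0 ≤ l ∧ a + l • u ∈ polyBody p) (ha : a ∉ polyBody p) : 0 < hitP p a u := by
  rcases (hitP_mem hray).1.lt_or_eq with h | h
  · exact h
  · exfalso; apply ha
    have := (hitP_mem hray).2
    rwa [← h, zero_smul, add_zero] at this

lemma hitP_free {l : ℝ} (h0 : 0 ≤ l) (hl : l < hitP p a u) : a + l • u ∉ polyBody p := by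
  intro hmem
  have hb : BddBelow {l : ℝ | 0 ≤ l ∧ a + l • u ∈ polyBody p} := ⟨0, fun x hx => hx.1⟩
  have : l ∈ {l : ℝ | 0 ≤ l ∧ a + l • u ∈ polyBody p} := ⟨h0, hmem⟩
  exact absurd (csInf_le hb this) (not_le.2 hl)

end hit

section twoD
open scoped RealInnerProductSpace

noncomputable def rot (e : Plane) : Plane :=
  (WithLp.equiv 2 (Fin 2 → ℝ)).symm ![-(e 1), e 0]

lemma rot_apply0 (e : Plane) : rot e 0 = -(e 1) := rfl
lemma rot_apply1 (e : Plane) : rot e 1 = e 0 := rfl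

lemma inner2 (x y : Plane) : ⟪x, y⟫ = x 0 * y 0 + x 1 * y 1 := by
  simp [PiLp.inner_apply, RCLike.inner_apply, Fin.sum_univ_two, mul_comm]

lemma inner_rot (x e : Plane) : ⟪x, rot e⟫ = x 1 * e 0 - x 0 * e 1 := by
  rw [inner2, rot_apply0, rot_apply1]; ring

lemma rot_perp (e : Plane) : ⟪e, rot e⟫ = 0 := by rw [inner_rot]; ring

lemma plane_ext {x y : Plane} (h0 : x 0 = y 0) (h1 : x 1 = y 1) : x = y := by
  ext i; fin_cases i <;> assumption

lemma plane_comp_ne {e : Plane} (he : e ≠ 0) : e 0 ≠ 0 ∨ e 1 ≠ 0 := by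
  by_contra h
  push_neg at h
  exact he (plane_ext (by simp [h.1]) (by simp [h.2]))

lemma smul_comp (t : ℝ) (e : Plane) (i : Fin 2) : (t • e) i = t * e i := rfl

lemma perp_span {e x : Plane} (he : e ≠ 0) (hx : ⟪x, rot e⟫ = 0) : ∃ t : ℝ, x = t • e := by
  rw [inner_rot, sub_eq_zero] at hx
  have hd : 0 < e 0 ^ 2 + e 1 ^ 2 := by
    rcases plane_comp_ne he with h | h <;> positivity
  refine ⟨(x 0 * e 0 + x 1 * e 1) / (e 0 ^ 2 + e 1 ^ 2), plane_ext ?_ ?_⟩ <;>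
    rw [smul_comp] <;> field_simp
  · linear_combination (-(e 1)) * hx
  · linear_combination (e 0) * hx

lemma norm_sq2 (x : Plane) : ‖x‖ ^ 2 = x 0 ^ 2 + x 1 ^ 2 := by
  rw [← real_inner_self_eq_norm_sq, inner2]; ring

lemma exists_angle {u : Plane} (hu : ‖u‖ = 1) :
    ∃ θ : ℝ, u 0 = Real.cos θ ∧ u 1 = Real.sin θ := by
  have h2 : u 0 ^ 2 + u 1 ^ 2 = 1 := by rw [← norm_sq2, hu]; norm_num
  set z : ℂ := ⟨u 0, u 1⟩ with hz
  have hsq : Complex.normSq z = 1 := by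
    rw [Complex.normSq_apply]
    show u 0 * u 0 + u 1 * u 1 = 1
    nlinarith
  have habs : ‖z‖ = 1 := by
    rw [Complex.norm_def]
    show Real.sqrt (Complex.normSq z) = 1
    rw [hsq, Real.sqrt_one]
  have hz0 : z ≠ 0 := by
    intro h; rw [h] at habs; simp at habs
  refine ⟨Complex.arg z, ?_, ?_⟩
  · rw [Complex.cos_arg hz0, habs]; simp [hz]
  · rw [Complex.sin_arg, habs]; simp [hz]

lemma angle_inj {θ θ' : ℝ} (h0 : Real.cos θ = Real.cos θ') (h1 : Real.sin θ = Real.sin θ') :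
    ∃ k : ℤ, θ' = θ + k * (2 * Real.pi) := by
  have h : Complex.exp (θ * Complex.I) = Complex.exp (θ' * Complex.I) := by
    rw [Complex.exp_mul_I, Complex.exp_mul_I]
    rw [← Complex.ofReal_cos, ← Complex.ofReal_cos, ← Complex.ofReal_sin, ← Complex.ofReal_sin,
      h0, h1]
  rw [Complex.exp_eq_exp_iff_exists_int] at h
  obtain ⟨k, hk⟩ := h
  have := congrArg Complex.im hk
  simp at this
  exact ⟨-k, by push_cast; linarith⟩

end twoD

section comb
variable {n : ℕ}

lemma zmod_cast_ne (hn : 4 ≤ n) {c : ℕ} (hc1 : 0 < c) (hc : c < 4) : (c : ZMod n) ≠ 0 := by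
  rw [Ne, ZMod.natCast_eq_zero_iff]
  intro hdvd
  exact absurd (Nat.le_of_dvd hc1 hdvd) (by omega)

lemma zmod_one_ne (hn : 4 ≤ n) : (1 : ZMod n) ≠ 0 := by
  have := zmod_cast_ne hn (c := 1) (by norm_num) (by norm_num); simpa using this

lemma zmod_two_ne (hn : 4 ≤ n) : (2 : ZMod n) ≠ 0 := by
  have := zmod_cast_ne hn (c := 2) (by norm_num) (by norm_num); simpa using this

lemma zmod_three_ne (hn : 4 ≤ n) : (3 : ZMod n) ≠ 0 := by
  have := zmod_cast_ne hn (c := 3) (by norm_num) (by norm_num); simpa using this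

variable {p : ZMod n → Plane}

def openEdge (p : ZMod n → Plane) (i : ZMod n) : Set Plane :=
  openSegment ℝ (p i) (p (i + 1))

lemma openEdge_subset (i : ZMod n) : openEdge p i ⊆ polyEdge p i :=
  openSegment_subset_segment ℝ _ _

lemma vertex_ne (hP : IsSimplePolygon p) (hn : 4 ≤ n) (i : ZMod n) : p i ≠ p (i + 1) := by
  intro h
  have := hP.inj h
  exact zmod_one_ne hn (left_eq_add.mp this)

lemma vertex_notmem_openEdge (hP : IsSimplePolygon p) (hn : 4 ≤ n) (i : ZMod n) :
    p i ∉ openEdge p i ∧ p (i + 1) ∉ openEdge p i := by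
  constructor
  · rw [openEdge, left_mem_openSegment_iff]
    exact vertex_ne hP hn i
  · rw [openEdge, right_mem_openSegment_iff]
    exact fun h => vertex_ne hP hn i h

lemma openEdge_disjoint (hP : IsSimplePolygon p) (hn : 4 ≤ n) {i j : ZMod n} (hij : i ≠ j)
    {x : Plane} (hxi : x ∈ openEdge p i) (hxj : x ∈ openEdge p j) : False := by
  by_cases h1 : j = i + 1
  · subst h1
    have hmem : x ∈ polyEdge p i ∩ polyEdge p (i + 1) :=
      ⟨openEdge_subset i hxi, openEdge_subset _ hxj⟩
    rw [hP.consec i] at hmem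
    rw [mem_singleton_iff] at hmem
    subst hmem
    exact (vertex_notmem_openEdge hP hn _).1 hxj
  by_cases h2 : i = j + 1
  · subst h2
    have hmem : x ∈ polyEdge p j ∩ polyEdge p (j + 1) :=
      ⟨openEdge_subset j hxj, openEdge_subset _ hxi⟩
    rw [hP.consec j] at hmem
    rw [mem_singleton_iff] at hmem
    subst hmem
    exact (vertex_notmem_openEdge hP hn _).1 hxi
  · have := hP.nonconsec i j (Ne.symm hij) h1 h2
    have hmem : x ∈ polyEdge p i ∩ polyEdge p j :=
      ⟨openEdge_subset i hxi, openEdge_subset j hxj⟩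
    rw [this] at hmem
    exact hmem

lemma body_classify {x : Plane} (hx : x ∈ polyBody p) :
    (∃ m, x = p m) ∨ ∃ i, x ∈ openEdge p i := by
  rw [polyBody, mem_iUnion] at hx
  obtain ⟨i, hi⟩ := hx
  rw [polyEdge, ← insert_endpoints_openSegment] at hi
  rcases hi with h | h | h
  · exact Or.inl ⟨i, h⟩
  · exact Or.inl ⟨i + 1, h⟩
  · exact Or.inr ⟨i, h⟩

end comb

section more
variable {n : ℕ} {p : ZMod n → Plane}

lemma edge_subset_body (i : ZMod n) : polyEdge p i ⊆ polyBody p :=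
  subset_iUnion (fun i => polyEdge p i) i

lemma vertex_mem_body (m : ZMod n) : p m ∈ polyBody p :=
  edge_subset_body m (left_mem_segment ℝ _ _)

lemma hitP_le {a u : Plane} {l : ℝ} (h0 : 0 ≤ l) (hl : a + l • u ∈ polyBody p) :
    hitP p a u ≤ l :=
  csInf_le ⟨0, fun x hx => hx.1⟩ ⟨h0, hl⟩

lemma vertex_notmem_openEdge' (hP : IsSimplePolygon p) (hn : 4 ≤ n) (m i : ZMod n) :
    p m ∉ openEdge p i := by
  intro hmem
  by_cases h1 : m = i
  · exact (vertex_notmem_openEdge hP hn i).1 (h1 ▸ hmem)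
  by_cases h2 : m = i + 1
  · exact (vertex_notmem_openEdge hP hn i).2 (h2 ▸ hmem)
  by_cases h3 : i = m + 1
  · have hmm : p m ∈ polyEdge p m ∩ polyEdge p (m + 1) :=
      ⟨left_mem_segment ℝ _ _, h3 ▸ openEdge_subset i hmem⟩
    rw [hP.consec m, mem_singleton_iff] at hmm
    exact vertex_ne hP hn m hmm
  · have hemp := hP.nonconsec i m h1 h2 h3
    have hmm : p m ∈ polyEdge p i ∩ polyEdge p m :=
      ⟨openEdge_subset i hmem, left_mem_segment ℝ _ _⟩
    rw [hemp] at hmm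
    exact hmm

lemma body_inter_openEdge (hP : IsSimplePolygon p) (hn : 4 ≤ n) {i j : ZMod n} (hij : j ≠ i)
    {x : Plane} (hx : x ∈ openEdge p i) (hx' : x ∈ polyEdge p j) : False := by
  rw [polyEdge, ← insert_endpoints_openSegment] at hx'
  rcases hx' with h | h | h
  · exact vertex_notmem_openEdge' hP hn j i (h ▸ hx)
  · exact vertex_notmem_openEdge' hP hn (j + 1) i (h ▸ hx)
  · exact openEdge_disjoint hP hn (Ne.symm hij) hx h

end more

section stab
open scoped RealInnerProductSpace
variable {n : ℕ} [NeZero n] {p : ZMod n → Plane} {a : Plane}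

lemma hit_transversal (hP : IsSimplePolygon p) (hn : 4 ≤ n) (ha : a ∉ polyBody p)
    {u0 : Plane} (hu0 : ‖u0‖ = 1)
    (hray0 : ∃ l : ℝ, 0 ≤ l ∧ a + l • u0 ∈ polyBody p) {i : ZMod n}
    (hq0 : a + hitP p a u0 • u0 ∈ openEdge p i) :
    ⟪u0, rot (p (i + 1) - p i)⟫ ≠ 0 := by
  set e : Plane := p (i + 1) - p i with he_def
  set ν : Plane := rot e with hν_def
  set lam0 : ℝ := hitP p a u0 with hlam_def
  have he : e ≠ 0 := sub_ne_zero.2 fun h => vertex_ne hP hn i h.symm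
  have hlam0 : 0 < lam0 := hitP_pos hray0 ha
  rw [openEdge, openSegment_eq_image'] at hq0
  obtain ⟨t0, ht0, hq0eq'⟩ := hq0
  have hq0eq : a + lam0 • u0 = p i + t0 • e := (hq0eq' : p i + t0 • e = _).symm
  clear hq0eq'
  intro hperp
  obtain ⟨r, hr⟩ := perp_span he hperp
  have hrne : r ≠ 0 := by
    intro h; rw [h, zero_smul] at hr
    rw [hr] at hu0; simp at hu0
  -- b - a is a multiple of e
  have hba : ⟪p i - a, ν⟫ = 0 := by
    have h1 : ⟪(a + lam0 • u0) - p i, ν⟫ = 0 := by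
      have hre : (a + lam0 • u0) - p i = t0 • e := by rw [hq0eq]; abel
      rw [hre, inner_smul_left, hν_def, rot_perp]; simp
    have h2 : ⟪(lam0 • u0 : Plane), ν⟫ = 0 := by
      rw [inner_smul_left, hperp]; simp
    have h3 : ⟪(a + lam0 • u0) - p i, ν⟫ = ⟪(lam0 • u0 : Plane), ν⟫ - ⟪p i - a, ν⟫ := by
      rw [← inner_sub_left]; congr 1; abel
    rw [h1, h2] at h3; linarith
  obtain ⟨s, hs⟩ := perp_span he hba
  -- coordinates
  have hbeq : p i = a + s • e := by
    have : a + (p i - a) = a + s • e := by rw [hs]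
    simpa using this
  have hkey : s + t0 = lam0 * r := by
    have h1 : a + lam0 • u0 = a + (lam0 * r) • e := by
      rw [hr, smul_smul]
    have h2 : a + lam0 • u0 = a + (s + t0) • e := by
      rw [hq0eq, hbeq]; module
    have h3 : ((s + t0) - lam0 * r) • e = 0 := by
      have := h2.symm.trans h1
      have h4 := add_left_cancel this
      rw [sub_smul, h4, sub_self]
    rcases smul_eq_zero.1 h3 with h | h
    · linarith [sub_eq_zero.1 (by linarith [h] : (s + t0) - lam0 * r = 0)]
    · exact absurd h he
  have haopen : -s ∈ Set.Ioo (0:ℝ) 1 → False := by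
    rintro ⟨hs0, hs1⟩
    refine ha (edge_subset_body i (openEdge_subset i ?_))
    rw [openEdge, openSegment_eq_image']
    refine ⟨-s, ⟨hs0, hs1⟩, ?_⟩
    show p i + (-s) • e = a
    rw [hbeq]; module
  rcases lt_or_gt_of_ne hrne with hrneg | hrpos
  · -- r < 0 : use vertex c = p (i+1)
    have hceq : p (i + 1) = a + ((s + 1) * r⁻¹ * r) • e := by
      rw [mul_assoc, inv_mul_cancel₀ hrne, mul_one]
      have hpe : p (i + 1) = p i + e := by rw [he_def]; abel
      rw [hpe, hbeq]; module
    have hchit : a + ((s + 1) * r⁻¹) • u0 ∈ polyBody p := by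
      rw [hr, smul_smul]
      rw [← hceq]
      exact vertex_mem_body (i + 1)
    have hneg : (s + 1) * r⁻¹ < 0 := by
      by_contra hge
      push_neg at hge
      have hle := hitP_le hge hchit
      rw [← hlam_def] at hle
      have h7 : (s + 1) * r⁻¹ * r = s + 1 := by field_simp
      have h6 : s + 1 ≤ lam0 * r := by nlinarith [hle]
      rw [← hkey] at h6
      linarith [ht0.2]
    have hs1 : s + 1 > 0 := by
      have h8 : r⁻¹ < 0 := inv_neg''.2 hrneg
      nlinarith [hneg]
    have hst : s + t0 < 0 := by
      rw [hkey]; exact mul_neg_of_pos_of_neg hlam0 hrneg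
    exact haopen ⟨by linarith [ht0.1], by linarith⟩
  · -- r > 0 : use vertex b = p i
    have hbhit : a + (s * r⁻¹) • u0 ∈ polyBody p := by
      rw [hr, smul_smul, mul_assoc, inv_mul_cancel₀ hrne, mul_one]
      have hip : a + s • e = p i := hbeq.symm
      rw [hip]
      exact vertex_mem_body i
    have hneg : s * r⁻¹ < 0 := by
      by_contra hge
      push_neg at hge
      have hle := hitP_le hge hbhit
      rw [← hlam_def] at hle
      have h7 : s * r⁻¹ * r = s := by field_simp
      have h6 : lam0 * r ≤ s := by nlinarith [hle]
      rw [← hkey] at h6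
      linarith [ht0.1]
    have hsneg : s < 0 := by
      have h8 : 0 < r⁻¹ := inv_pos.2 hrpos
      nlinarith [hneg]
    have hst : s + t0 > 0 := by
      rw [hkey]; exact mul_pos hlam0 hrpos
    exact haopen ⟨by linarith [hsneg], by linarith [ht0.2]⟩

end stab

lemma compact_sep {A K : Set Plane} (hA : IsCompact A) (hK : IsClosed K) (hKne : K.Nonempty)
    (hd : ∀ x ∈ A, x ∉ K) : ∃ δ > 0, ∀ x ∈ A, ∀ y ∈ K, δ ≤ dist x y := by
  rcases A.eq_empty_or_nonempty with h | hAne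
  · exact ⟨1, one_pos, by simp [h]⟩
  obtain ⟨x0, hx0A, hx0min⟩ :=
    hA.exists_isMinOn hAne (continuous_infDist_pt K).continuousOn
  refine ⟨infDist x0 K, (hK.notMem_iff_infDist_pos hKne).1 (hd x0 hx0A), ?_⟩
  intro x hx y hy
  exact le_trans (hx0min hx) (infDist_le_dist_of_mem hy)

section stab2
open scoped RealInnerProductSpace
variable {n : ℕ} [NeZero n] {p : ZMod n → Plane} {a : Plane}

lemma hit_stable (hP : IsSimplePolygon p) (hn : 4 ≤ n) (ha : a ∉ polyBody p)
    (hray : ∀ u : Plane, ‖u‖ = 1 → ∃ l : ℝ, 0 ≤ l ∧ a + l • u ∈ polyBody p)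
    {u0 : Plane} (hu0 : ‖u0‖ = 1) {i : ZMod n}
    (hq0 : a + hitP p a u0 • u0 ∈ openEdge p i) :
    ∃ ε > 0, ∀ u : Plane, ‖u‖ = 1 → dist u u0 < ε →
      a + hitP p a u • u ∈ openEdge p i := by
  classical
  set e : Plane := p (i + 1) - p i with he_def
  set ν : Plane := rot e with hν_def
  set lam0 : ℝ := hitP p a u0 with hlam_def
  set q0 : Plane := a + lam0 • u0 with hq0_def
  have he : e ≠ 0 := sub_ne_zero.2 fun h => vertex_ne hP hn i h.symm
  have hee : ⟪e, e⟫ ≠ 0 := inner_self_ne_zero.2 he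
  have hlam0 : 0 < lam0 := hitP_pos (hray u0 hu0) ha
  have hF0 : ⟪u0, ν⟫ ≠ 0 := hit_transversal hP hn ha hu0 (hray u0 hu0) hq0
  -- t0
  have hq0' := hq0
  rw [openEdge, openSegment_eq_image'] at hq0'
  obtain ⟨t0, ht0, hq0eq'⟩ := hq0'
  have hq0eq : q0 = p i + t0 • e := (hq0eq' : p i + t0 • e = _).symm
  clear hq0eq'
  set h : ℝ := ⟪p i - a, ν⟫ with hh_def
  have hperp_e : ∀ t : ℝ, ⟪t • e, ν⟫ = 0 := by
    intro t; rw [inner_smul_left, hν_def, rot_perp]; simp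
  have hhval : h = lam0 * ⟪u0, ν⟫ := by
    have h1 : ⟪q0 - p i, ν⟫ = 0 := by rw [hq0eq]; simpa using hperp_e t0
    have h2 : ⟪q0 - a, ν⟫ = lam0 * ⟪u0, ν⟫ := by
      rw [hq0_def]
      have : a + lam0 • u0 - a = lam0 • u0 := by abel
      rw [this, inner_smul_left]; simp
    have h3 : ⟪q0 - a, ν⟫ = ⟪q0 - p i, ν⟫ + h := by
      rw [hh_def, ← inner_add_left]; congr 1; abel
    rw [h1, h2] at h3
    linarith [h3]
  -- separation constant
  obtain ⟨δ0, hδ0, hsep⟩ : ∃ δ > 0, ∀ x ∈ segment ℝ a q0,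
      ∀ y ∈ ⋃ j ∈ ({i}ᶜ : Set (ZMod n)), polyEdge p j, δ ≤ dist x y := by
    apply compact_sep (isCompact_seg a q0)
    · exact Set.Finite.isClosed_biUnion (Set.toFinite _)
        (fun j _ => (isCompact_seg _ _).isClosed)
    · refine ⟨p (i + 1), mem_iUnion₂.2 ⟨i + 1, ?_, left_mem_segment ℝ _ _⟩⟩
      simp only [mem_compl_iff, mem_singleton_iff]
      intro hcon
      exact zmod_one_ne hn (by simpa using hcon)
    · rintro x hx hxK
      rw [segment_eq_image'] at hx
      obtain ⟨θ, hθ, hxeq⟩ := hx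
      have hxeq2 : x = a + (θ * lam0) • u0 := by
        rw [← (hxeq : a + θ • (q0 - a) = x), hq0_def]
        module
      obtain ⟨j, hjmem, hyj⟩ := mem_iUnion₂.1 hxK
      have hjne : j ≠ i := hjmem
      rcases lt_or_eq_of_le (by nlinarith [hθ.1, hθ.2, hlam0] : θ * lam0 ≤ lam0) with hlt | heq
      · exact hitP_free (mul_nonneg hθ.1 hlam0.le) hlt (hxeq2 ▸ edge_subset_body j hyj)
      · have hxq0 : x = q0 := by rw [hxeq2, heq, hq0_def]
        exact body_inter_openEdge hP hn hjne (hxq0 ▸ hq0) hyj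
  -- continuity: the set of good u is a neighborhood of u0
  set F : Plane → ℝ := fun u => ⟪u, ν⟫ with hF_def
  set lf : Plane → ℝ := fun u => h / F u with hlf_def
  set X : Plane → Plane := fun u => a + lf u • u with hX_def
  set tf : Plane → ℝ := fun u => ⟪X u - p i, e⟫ / ⟪e, e⟫ with htf_def
  have hFcont : Continuous F := continuous_id.inner continuous_const
  have hlfc : ContinuousAt lf u0 := ContinuousAt.div continuousAt_const hFcont.continuousAt hF0
  have hXc : ContinuousAt X u0 := continuousAt_const.add (hlfc.smul continuousAt_id)
  have htfc : ContinuousAt tf u0 :=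
    ContinuousAt.div ((hXc.sub continuousAt_const).inner continuousAt_const)
      continuousAt_const hee
  have hlfu0 : lf u0 = lam0 := by
    rw [hlf_def]; show h / F u0 = lam0
    rw [hhval]
    exact mul_div_cancel_right₀ _ hF0
  have hXu0 : X u0 = q0 := by
    rw [hX_def]; show a + lf u0 • u0 = q0
    rw [hlfu0, hq0_def]
  have htfu0 : tf u0 = t0 := by
    rw [htf_def]; show ⟪X u0 - p i, e⟫ / ⟪e, e⟫ = t0
    rw [hXu0, hq0eq]
    have : p i + t0 • e - p i = t0 • e := by abel
    rw [this, real_inner_smul_left]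
    exact mul_div_cancel_right₀ _ hee
  have hS : {u : Plane | F u ≠ 0 ∧ 0 < lf u ∧ tf u ∈ Ioo (0:ℝ) 1 ∧ dist (X u) q0 < δ0}
      ∈ nhds u0 := by
    have m1 : {u : Plane | F u ≠ 0} ∈ nhds u0 :=
      (isOpen_compl_singleton.preimage hFcont).mem_nhds hF0
    have m2 : {u : Plane | 0 < lf u} ∈ nhds u0 := by
      have := hlfc.preimage_mem_nhds (Ioi_mem_nhds (by rw [hlfu0]; exact hlam0))
      simpa [Set.preimage] using this
    have m3 : {u : Plane | tf u ∈ Ioo (0:ℝ) 1} ∈ nhds u0 := by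
      have := htfc.preimage_mem_nhds (isOpen_Ioo.mem_nhds (by rw [htfu0]; exact ht0))
      simpa [Set.preimage] using this
    have m4 : {u : Plane | dist (X u) q0 < δ0} ∈ nhds u0 := by
      have hball : Metric.ball q0 δ0 ∈ nhds (X u0) := by
        rw [hXu0]; exact Metric.ball_mem_nhds _ hδ0
      have := hXc.preimage_mem_nhds hball
      simpa [Set.preimage, Metric.mem_ball] using this
    filter_upwards [m1, m2, m3, m4] with u h1 h2 h3 h4
    exact ⟨h1, h2, h3, h4⟩
  obtain ⟨ε, hε, hball⟩ := Metric.mem_nhds_iff.1 hS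
  refine ⟨ε, hε, ?_⟩
  intro u hu hdist
  obtain ⟨hF, hlfu, htu, hXd⟩ := hball (Metric.mem_ball.2 hdist)
  -- X u lies on the open edge i
  have hXperp : ⟪X u - p i, ν⟫ = 0 := by
    have h1 : X u - p i = (a - p i) + lf u • u := by rw [hX_def]; show a + lf u • u - p i = _; abel
    rw [h1, inner_add_left, inner_smul_left]
    have h2 : ⟪a - p i, ν⟫ = -h := by
      rw [hh_def, ← inner_neg_left]; congr 1; abel
    rw [h2]
    show -h + lf u * F u = 0
    rw [hlf_def]
    show -h + h / F u * F u = 0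
    field_simp
    ring
  obtain ⟨τ, hτ⟩ := perp_span he hXperp
  have hτval : τ = tf u := by
    rw [htf_def]
    show τ = ⟪X u - p i, e⟫ / ⟪e, e⟫
    rw [hτ, real_inner_smul_left]
    exact (mul_div_cancel_right₀ _ hee).symm
  have hXedge : X u ∈ openEdge p i := by
    rw [openEdge, openSegment_eq_image']
    refine ⟨tf u, htu, ?_⟩
    show p i + tf u • e = X u
    rw [← hτval, ← hτ]; abel
  -- X u is the first hit
  have hXbody : a + lf u • u ∈ polyBody p := by
    have : X u = a + lf u • u := rfl
    exact this ▸ edge_subset_body i (openEdge_subset i hXedge)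
  have hle : hitP p a u ≤ lf u := hitP_le hlfu.le hXbody
  have hfree : ∀ m : ℝ, 0 ≤ m → m < lf u → a + m • u ∉ polyBody p := by
    intro m hm0 hmlt hmem
    rw [polyBody, mem_iUnion] at hmem
    obtain ⟨j, hj⟩ := hmem
    by_cases hji : j = i
    · subst hji
      rw [polyEdge, segment_eq_image'] at hj
      obtain ⟨σ, hσ, hjeq⟩ := hj
      have hyperp : ⟪(a + m • u) - p j, ν⟫ = 0 := by
        rw [← (hjeq : p j + σ • (p (j+1) - p j) = _)]
        have hre : p j + σ • (p (j + 1) - p j) - p j = σ • e := by rw [he_def]; abel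
        rw [hre]
        exact hperp_e σ
      have h1 : (a + m • u) - p j = (a - p j) + m • u := by abel
      rw [h1, inner_add_left, real_inner_smul_left] at hyperp
      have h2 : ⟪a - p j, ν⟫ = -h := by
        rw [hh_def, ← inner_neg_left]; congr 1; abel
      rw [h2] at hyperp
      have hmF : m * F u = h := by
        show m * ⟪u, ν⟫ = h
        linarith [hyperp]
      have : m = lf u := by
        rw [hlf_def]; show m = h / F u
        rw [← hmF]; field_simp
      linarith
    · -- y is in another edge, far from the segment [a, q0]
      set σ : ℝ := m / lf u with hσ_def
      have hσ : σ ∈ Icc (0:ℝ) 1 := ⟨by positivity, by rw [hσ_def]; exact div_le_one_of_le₀ hmlt.le hlfu.le⟩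
      have hy' : a + (σ * lam0) • u0 ∈ segment ℝ a q0 := by
        rw [segment_eq_image']
        exact ⟨σ, hσ, by rw [hq0_def]; module⟩
      have hyK : a + m • u ∈ ⋃ j' ∈ ({i}ᶜ : Set (ZMod n)), polyEdge p j' :=
        mem_biUnion (hji : j ∈ ({i}ᶜ : Set (ZMod n))) hj
      have hδle := hsep _ hy' _ hyK
      have hmσ : m = σ * lf u := by rw [hσ_def]; field_simp
      have hdy : dist (a + (σ * lam0) • u0) (a + m • u) = σ * dist (X u) q0 := by
        rw [dist_eq_norm, dist_eq_norm]
        have h3 : a + (σ * lam0) • u0 - (a + m • u) = σ • (q0 - X u) := by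
          rw [hmσ, hq0_def, hX_def]
          show a + (σ * lam0) • u0 - (a + (σ * lf u) • u) = σ • (a + lam0 • u0 - (a + lf u • u))
          module
        rw [h3, norm_smul, Real.norm_eq_abs, abs_of_nonneg hσ.1, ← norm_sub_rev]
      have : δ0 ≤ σ * dist (X u) q0 := hdy ▸ hδle
      nlinarith [hσ.1, hσ.2, dist_nonneg (x := X u) (y := q0)]
  have heq : hitP p a u = lf u := by
    rcases lt_or_eq_of_le hle with hlt | heq
    · exact absurd ((hitP_mem (hray u hu)).2) (hfree _ (hitP_mem (hray u hu)).1 hlt)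
    · exact heq
  rw [heq]
  exact hXedge

end stab2

lemma preconn_cover {ι : Type*} [Fintype ι] {U : ι → Set ℝ} (hU : ∀ i, IsOpen (U i))
    (hdisj : ∀ i j, i ≠ j → ∀ x, x ∈ U i → x ∈ U j → False)
    {s : Set ℝ} (hs : IsPreconnected s) (hsub : s ⊆ ⋃ i, U i) {x : ℝ} (hx : x ∈ s) :
    ∃ i, s ⊆ U i := by
  obtain ⟨i0, hi0⟩ := mem_iUnion.1 (hsub hx)
  refine ⟨i0, ?_⟩
  have hopen2 : IsOpen (⋃ j ∈ ({i0}ᶜ : Set ι), U j) := isOpen_biUnion fun j _ => hU j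
  have hd : Disjoint (U i0) (⋃ j ∈ ({i0}ᶜ : Set ι), U j) := by
    rw [Set.disjoint_left]
    rintro y hy hy2
    obtain ⟨j, hj, hyj⟩ := mem_iUnion₂.1 hy2
    exact hdisj i0 j (Ne.symm hj) y hy hyj
  have hsub2 : s ⊆ U i0 ∪ ⋃ j ∈ ({i0}ᶜ : Set ι), U j := by
    intro y hy
    rcases mem_iUnion.1 (hsub hy) with ⟨j, hyj⟩
    by_cases h : j = i0
    · exact Or.inl (h ▸ hyj)
    · exact Or.inr (mem_iUnion₂.2 ⟨j, h, hyj⟩)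
  rcases hs.subset_or_subset (hU i0) hopen2 hd hsub2 with h | h
  · exact h
  · exfalso
    obtain ⟨j, hj, hxj⟩ := mem_iUnion₂.1 (h hx)
    exact hdisj i0 j (Ne.symm hj) x hi0 hxj

noncomputable def cir (θ : ℝ) : Plane :=
  (WithLp.equiv 2 (Fin 2 → ℝ)).symm ![Real.cos θ, Real.sin θ]

lemma cir_apply0 (θ : ℝ) : cir θ 0 = Real.cos θ := rfl
lemma cir_apply1 (θ : ℝ) : cir θ 1 = Real.sin θ := rfl

lemma cir_norm (θ : ℝ) : ‖cir θ‖ = 1 := by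
  have h := norm_sq2 (cir θ)
  rw [cir_apply0, cir_apply1] at h
  have h2 : ‖cir θ‖ ^ 2 = 1 := by rw [h]; exact Real.cos_sq_add_sin_sq θ
  nlinarith [norm_nonneg (cir θ)]

lemma cir_continuous : Continuous cir := by
  apply (PiLp.continuous_toLp 2 (fun _ : Fin 2 => ℝ)).comp
  apply continuous_pi
  intro i
  fin_cases i
  · simpa using Real.continuous_cos
  · simpa using Real.continuous_sin

lemma cir_surj {u : Plane} (hu : ‖u‖ = 1) : ∃ θ : ℝ, cir θ = u := by
  obtain ⟨θ, h0, h1⟩ := exists_angle hu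
  exact ⟨θ, plane_ext (by rw [cir_apply0, h0]) (by rw [cir_apply1, h1])⟩

lemma cir_eq_iff {θ θ' : ℝ} (h : cir θ = cir θ') : ∃ k : ℤ, θ' = θ + k * (2 * Real.pi) := by
  have h0 : Real.cos θ = Real.cos θ' := by
    rw [← cir_apply0, ← cir_apply0, h]
  have h1 : Real.sin θ = Real.sin θ' := by
    rw [← cir_apply1, ← cir_apply1, h]
  exact angle_inj h0 h1

lemma cir_periodic (θ : ℝ) (k : ℤ) : cir (θ + k * (2 * Real.pi)) = cir θ :=
  plane_ext (by rw [cir_apply0, cir_apply0]; exact Real.cos_add_int_mul_two_pi θ k)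
    (by rw [cir_apply1, cir_apply1]; exact Real.sin_add_int_mul_two_pi θ k)

lemma shift_angle (θ0 θ : ℝ) : ∃ k : ℤ,
    θ0 ≤ θ + k * (2 * Real.pi) ∧ θ + k * (2 * Real.pi) < θ0 + 2 * Real.pi := by
  have h2π : (0:ℝ) < 2 * Real.pi := by positivity
  refine ⟨⌈(θ0 - θ) / (2 * Real.pi)⌉, ?_, ?_⟩
  · have := Int.le_ceil ((θ0 - θ) / (2 * Real.pi))
    rw [div_le_iff₀ h2π] at this
    linarith
  · have := Int.ceil_lt_add_one ((θ0 - θ) / (2 * Real.pi))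
    have h3 : (⌈(θ0 - θ) / (2 * Real.pi)⌉ : ℝ) * (2 * Real.pi)
        < ((θ0 - θ) / (2 * Real.pi) + 1) * (2 * Real.pi) := by
      apply mul_lt_mul_of_pos_right this h2π
    rw [add_mul, div_mul_cancel₀ _ (ne_of_gt h2π), one_mul] at h3
    linarith

section cone
open scoped RealInnerProductSpace

lemma rot_ne_zero {v : Plane} (hv : v ≠ 0) : rot v ≠ 0 := by
  intro h
  apply hv
  have h0 : rot v 0 = 0 := by rw [h]; rfl
  have h1 : rot v 1 = 0 := by rw [h]; rfl
  rw [rot_apply0] at h0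
  rw [rot_apply1] at h1
  exact plane_ext (by simpa using h1) (by simpa using h0)

lemma norm_smul_unit {v : Plane} (hv : v ≠ 0) : ‖(‖v‖⁻¹ • v : Plane)‖ = 1 := by
  rw [norm_smul, norm_inv, norm_norm]
  exact inv_mul_cancel₀ (norm_ne_zero_iff.2 hv)

lemma inner_self_pos' {x : Plane} (hx : x ≠ 0) : (0:ℝ) < ⟪x, x⟫ := by
  rw [real_inner_self_eq_norm_sq]
  have := norm_pos_iff.2 hx
  positivity

lemma cone_dir (f g : Plane →L[ℝ] ℝ) (hf : ∃ v, f v < 0) (hg : ∃ v, g v < 0)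
    (d0 d1 : Plane) (hd : d1 ≠ -d0) :
    ∃ u : Plane, ‖u‖ = 1 ∧ f u ≤ 0 ∧ g u ≤ 0 ∧ u ≠ d0 ∧ u ≠ d1 := by
  by_cases hfg : ∃ v, f v < 0 ∧ g v < 0
  · obtain ⟨v, hfv, hgv⟩ := hfg
    have hv : v ≠ 0 := by rintro rfl; simp at hfv
    set t1 : ℝ := min (-f v / (|f (rot v)| + 1)) (-g v / (|g (rot v)| + 1)) with ht1_def
    have ht1 : 0 < t1 := by
      apply lt_min <;> apply div_pos (by linarith) <;> positivity
    have hw : ∀ t : ℝ, 0 ≤ t → t ≤ t1 → f (v + t • rot v) < 0 ∧ g (v + t • rot v) < 0 := by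
      intro t ht0 htt1
      constructor
      · rw [map_add, map_smul, smul_eq_mul]
        have h1 : t ≤ -f v / (|f (rot v)| + 1) := le_trans htt1 (min_le_left _ _)
        have h2 : t * f (rot v) ≤ t * |f (rot v)| :=
          mul_le_mul_of_nonneg_left (le_abs_self _) ht0
        have h3 : t * (|f (rot v)| + 1) ≤ -f v := by
          rw [← div_mul_cancel₀ (-f v) (show (|f (rot v)| + 1) ≠ 0 by positivity)]
          exact mul_le_mul_of_nonneg_right h1 (by positivity)
        nlinarith [abs_nonneg (f (rot v))]
      · rw [map_add, map_smul, smul_eq_mul]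
        have h1 : t ≤ -g v / (|g (rot v)| + 1) := le_trans htt1 (min_le_right _ _)
        have h2 : t * g (rot v) ≤ t * |g (rot v)| :=
          mul_le_mul_of_nonneg_left (le_abs_self _) ht0
        have h3 : t * (|g (rot v)| + 1) ≤ -g v := by
          rw [← div_mul_cancel₀ (-g v) (show (|g (rot v)| + 1) ≠ 0 by positivity)]
          exact mul_le_mul_of_nonneg_right h1 (by positivity)
        nlinarith [abs_nonneg (g (rot v))]
    -- three distinct unit candidates
    set W : ℝ → Plane := fun t => v + t • rot v with hW_def
    have hWne : ∀ t : ℝ, W t ≠ 0 := by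
      intro t h
      have : ⟪W t, v⟫ = 0 := by rw [h]; exact inner_zero_left v
      rw [hW_def] at this
      simp only [inner_add_left, real_inner_smul_left] at this
      have hperp : ⟪rot v, v⟫ = 0 := by
        rw [real_inner_comm]; exact rot_perp v
      rw [hperp, mul_zero, add_zero] at this
      exact hv (inner_self_eq_zero.1 this)
    set q : ℝ → Plane := fun t => ‖W t‖⁻¹ • W t with hq_def
    have hWv : ∀ t : ℝ, ⟪W t, v⟫ = ⟪v, v⟫ := by
      intro t
      rw [hW_def]
      show ⟪v + t • rot v, v⟫ = ⟪v, v⟫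
      rw [inner_add_left, real_inner_smul_left]
      have hperp : ⟪rot v, v⟫ = 0 := by rw [real_inner_comm]; exact rot_perp v
      rw [hperp]; ring
    have hWr : ∀ t : ℝ, ⟪W t, rot v⟫ = t * ⟪rot v, rot v⟫ := by
      intro t
      rw [hW_def]
      show ⟪v + t • rot v, rot v⟫ = t * ⟪rot v, rot v⟫
      rw [inner_add_left, real_inner_smul_left, rot_perp]; ring
    have hnormW : ∀ t : ℝ, (0:ℝ) < ‖W t‖⁻¹ :=
      fun t => inv_pos.2 (norm_pos_iff.2 (hWne t))
    have hqinj : ∀ t t' : ℝ, q t = q t' → t = t' := by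
      intro t t' h
      have e1 : ⟪q t, v⟫ = ⟪q t', v⟫ := by rw [h]
      have e2 : ⟪q t, rot v⟫ = ⟪q t', rot v⟫ := by rw [h]
      rw [hq_def] at e1 e2
      simp only [real_inner_smul_left] at e1 e2
      rw [hWv, hWv] at e1
      rw [hWr, hWr] at e2
      have hvv : (0:ℝ) < ⟪v, v⟫ := inner_self_pos' hv
      have hrr : (0:ℝ) < ⟪rot v, rot v⟫ := inner_self_pos' (rot_ne_zero hv)
      have hc : ‖W t‖⁻¹ = ‖W t'‖⁻¹ := by
        have := mul_right_cancel₀ (ne_of_gt hvv) e1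
        exact this
      rw [hc] at e2
      have := mul_left_cancel₀ (ne_of_gt (hnormW t')) e2
      exact mul_right_cancel₀ (ne_of_gt hrr) this
    have hqgood : ∀ t : ℝ, 0 ≤ t → t ≤ t1 → ‖q t‖ = 1 ∧ f (q t) ≤ 0 ∧ g (q t) ≤ 0 := by
      intro t h0 h1
      obtain ⟨hfw, hgw⟩ := hw t h0 h1
      refine ⟨norm_smul_unit (hWne t), ?_, ?_⟩
      · rw [hq_def]
        show f (‖W t‖⁻¹ • W t) ≤ 0
        rw [map_smul, smul_eq_mul]
        nlinarith [hnormW t]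
      · rw [hq_def]
        show g (‖W t‖⁻¹ • W t) ≤ 0
        rw [map_smul, smul_eq_mul]
        nlinarith [hnormW t]
    have key : ∀ t t' : ℝ, t ≠ t' → q t = q t' → False :=
      fun t t' htt h => htt (hqinj _ _ h)
    have hne1 : (0:ℝ) ≠ t1 / 2 := by linarith
    have hne2 : (0:ℝ) ≠ t1 := by linarith
    have hne3 : t1 / 2 ≠ t1 := by linarith
    by_cases c0 : q 0 ≠ d0 ∧ q 0 ≠ d1
    · obtain ⟨h1, h2, h3⟩ := hqgood 0 le_rfl ht1.le
      exact ⟨q 0, h1, h2, h3, c0.1, c0.2⟩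
    by_cases ch : q (t1/2) ≠ d0 ∧ q (t1/2) ≠ d1
    · obtain ⟨h1, h2, h3⟩ := hqgood (t1/2) (by linarith) (by linarith)
      exact ⟨q (t1/2), h1, h2, h3, ch.1, ch.2⟩
    by_cases c1 : q t1 ≠ d0 ∧ q t1 ≠ d1
    · obtain ⟨h1, h2, h3⟩ := hqgood t1 ht1.le le_rfl
      exact ⟨q t1, h1, h2, h3, c1.1, c1.2⟩
    exfalso
    rw [not_and_or, not_ne_iff, not_ne_iff] at c0 ch c1
    rcases c0 with a0 | a0 <;> rcases ch with ah | ah <;> rcases c1 with a1 | a1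
    · exact key 0 (t1/2) hne1 (a0.trans ah.symm)
    · exact key 0 (t1/2) hne1 (a0.trans ah.symm)
    · exact key 0 t1 hne2 (a0.trans a1.symm)
    · exact key (t1/2) t1 hne3 (ah.trans a1.symm)
    · exact key (t1/2) t1 hne3 (ah.trans a1.symm)
    · exact key 0 t1 hne2 (a0.trans a1.symm)
    · exact key 0 (t1/2) hne1 (a0.trans ah.symm)
    · exact key 0 (t1/2) hne1 (a0.trans ah.symm)
  · push_neg at hfg
    obtain ⟨v, hfv⟩ := hf
    have hv : v ≠ 0 := by rintro rfl; simp at hfv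
    set k : Plane := f (rot v) • v - f v • rot v with hk_def
    have hfk : f k = 0 := by
      rw [hk_def, map_sub, map_smul, map_smul, smul_eq_mul, smul_eq_mul]
      ring
    have hk0 : k ≠ 0 := by
      intro h
      have h1 : ⟪k, rot v⟫ = 0 := by rw [h]; exact inner_zero_left _
      rw [hk_def] at h1
      simp only [inner_sub_left, real_inner_smul_left] at h1
      have hperp : ⟪v, rot v⟫ = 0 := rot_perp v
      rw [hperp, mul_zero, zero_sub, neg_eq_zero] at h1
      have hrr : (0:ℝ) < ⟪rot v, rot v⟫ := inner_self_pos' (rot_ne_zero hv)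
      rcases mul_eq_zero.1 h1 with h2 | h2
      · exact absurd h2 (ne_of_lt hfv)
      · exact absurd h2 (ne_of_gt hrr)
    have hgk : g k = 0 := by
      by_contra hgk0
      have hlin : ∀ t : ℝ, 0 ≤ g v + t * g k := by
        intro t
        have hft : f (v + t • k) < 0 := by
          rw [map_add, map_smul, smul_eq_mul, hfk, mul_zero, add_zero]; exact hfv
        have := hfg (v + t • k) hft
        rw [map_add, map_smul, smul_eq_mul] at this
        linarith
      have := hlin ((-1 - g v) / g k)
      rw [div_mul_cancel₀ _ hgk0] at this
      linarith
    set u1 : Plane := ‖k‖⁻¹ • k with hu1_def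
    have hu1norm : ‖u1‖ = 1 := norm_smul_unit hk0
    have hfu1 : f u1 = 0 := by rw [hu1_def, map_smul, smul_eq_mul, hfk, mul_zero]
    have hgu1 : g u1 = 0 := by rw [hu1_def, map_smul, smul_eq_mul, hgk, mul_zero]
    have hu12 : u1 ≠ -u1 := by
      intro h
      have h2 : (2:ℝ) • u1 = 0 := by
        rw [two_smul]
        nth_rewrite 2 [h]
        abel
      rcases smul_eq_zero.1 h2 with h3 | h3
      · norm_num at h3
      · rw [h3] at hu1norm; simp at hu1norm
    by_cases c1 : u1 ≠ d0 ∧ u1 ≠ d1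
    · exact ⟨u1, hu1norm, le_of_eq hfu1, le_of_eq hgu1, c1.1, c1.2⟩
    by_cases c2 : -u1 ≠ d0 ∧ -u1 ≠ d1
    · exact ⟨-u1, by rw [norm_neg]; exact hu1norm, by rw [map_neg, hfu1]; norm_num,
        by rw [map_neg, hgu1]; norm_num, c2.1, c2.2⟩
    exfalso
    rw [not_and_or, not_ne_iff, not_ne_iff] at c1 c2
    rcases c1 with a1 | a1 <;> rcases c2 with a2 | a2
    · exact hu12 (a1.trans a2.symm)
    · exact hd (a2.symm.trans (congrArg Neg.neg a1) : d1 = -d0)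
    · apply hd
      rw [← a1, ← a2]
      simp
    · exact hu12 (a1.trans a2.symm)
end cone

theorem stmt8 {n : ℕ} (p : ZMod n → Plane) (hP : IsSimplePolygon p) (hn : 4 ≤ n)
    (a : Plane) (ha : a ∉ polyBody p)
    (hray : ∀ u : Plane, ‖u‖ = 1 → ∃ l : ℝ, 0 ≤ l ∧ a + l • u ∈ polyBody p) :
    ∃ i j : ZMod n, i ≠ j ∧ j ≠ i + 1 ∧ i ≠ j + 1 ∧
      openSegment ℝ a (p i) ∩ polyBody p = ∅ ∧
      openSegment ℝ a (p j) ∩ polyBody p = ∅ := by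
  haveI : NeZero n := ⟨by omega⟩
  by_contra hcon
  push_neg at hcon
  set Vis : ZMod n → Prop := fun k => openSegment ℝ a (p k) ∩ polyBody p = ∅ with hVis_def
  have hpair : ∀ k1 k2, Vis k1 → Vis k2 → k1 = k2 ∨ k2 = k1 + 1 ∨ k1 = k2 + 1 := by
    intro k1 k2 h1 h2
    by_contra hne
    push_neg at hne
    have hne2 := hcon k1 k2 hne.1 hne.2.1 hne.2.2 h1
    rw [show openSegment ℝ a (p k2) ∩ polyBody p = ∅ from h2] at hne2
    exact Set.not_nonempty_empty hne2
  obtain ⟨s, hW⟩ : ∃ s : ZMod n, ∀ k, Vis k → k = s ∨ k = s + 1 := by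
    by_cases hex : ∃ k, Vis k
    · obtain ⟨k0, hk0⟩ := hex
      by_cases hm : Vis (k0 - 1)
      · refine ⟨k0 - 1, fun k hk => ?_⟩
        rcases hpair k0 k hk0 hk with h | h | h
        · right; rw [← h]; ring
        · exfalso
          rcases hpair k (k0 - 1) hk hm with h2 | h2 | h2
          · rw [h] at h2
            exact zmod_two_ne hn (by linear_combination h2)
          · rw [h] at h2
            exact zmod_three_ne hn (by linear_combination -h2)
          · rw [h] at h2
            exact zmod_one_ne hn (by linear_combination h2)
        · left; rw [h]; ring
      · refine ⟨k0, fun k hk => ?_⟩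
        rcases hpair k0 k hk0 hk with h | h | h
        · left; exact h.symm
        · right; exact h
        · exfalso
          apply hm
          have : k0 - 1 = k := by rw [h]; ring
          rw [this]
          exact hk
    · exact ⟨0, fun k hk => absurd ⟨k, hk⟩ hex⟩
  have hpa : ∀ m : ZMod n, p m - a ≠ 0 :=
    fun m => sub_ne_zero.2 (fun h => ha (h ▸ vertex_mem_body m))
  set d : ZMod n → Plane := fun m => ‖p m - a‖⁻¹ • (p m - a) with hd_def
  have hdnorm : ∀ m, ‖d m‖ = 1 := fun m => norm_smul_unit (hpa m)
  have hvert : ∀ u : Plane, ‖u‖ = 1 → ∀ m, a + hitP p a u • u = p m → u = d m := by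
    intro u hu m hm
    have hlam : 0 < hitP p a u := hitP_pos (hray u hu) ha
    have h1 : p m - a = hitP p a u • u := by rw [← hm]; abel
    have h2 : ‖p m - a‖ = hitP p a u := by
      rw [h1, norm_smul, hu, Real.norm_eq_abs, abs_of_pos hlam, mul_one]
    show u = ‖p m - a‖⁻¹ • (p m - a)
    rw [h2, h1, smul_smul, inv_mul_cancel₀ (ne_of_gt hlam), one_smul]
  have hvis : ∀ u : Plane, ‖u‖ = 1 → ∀ m, a + hitP p a u • u = p m → Vis m := by
    intro u hu m hm
    show openSegment ℝ a (p m) ∩ polyBody p = ∅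
    rw [eq_empty_iff_forall_notMem]
    rintro x ⟨hx1, hx2⟩
    rw [openSegment_eq_image'] at hx1
    obtain ⟨θ, hθ, hxeq⟩ := hx1
    have hlam : 0 < hitP p a u := hitP_pos (hray u hu) ha
    have hxe2 : x = a + (θ * hitP p a u) • u := by
      have hxeq2 : a + θ • (p m - a) = x := hxeq
      have h1 : p m - a = hitP p a u • u := by rw [← hm]; abel
      rw [← hxeq2, h1, smul_smul]
    refine hitP_free (mul_nonneg hθ.1.le hlam.le) ?_ (hxe2 ▸ hx2)
    nlinarith [hθ.2, hlam]
  have hvert2 : ∀ u : Plane, ‖u‖ = 1 → ∀ m, a + hitP p a u • u = p m →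
      u = d s ∨ u = d (s + 1) := by
    intro u hu m hm
    rcases hW m (hvis u hu m hm) with h | h
    · left; rw [h] at hm; exact hvert u hu s hm
    · right; rw [h] at hm; exact hvert u hu (s + 1) hm
  have hd10 : d (s + 1) ≠ -(d s) := by
    intro hneg
    apply ha
    have hn1 : ‖p (s + 1) - a‖ ≠ 0 := norm_ne_zero_iff.2 (hpa (s + 1))
    set c : ℝ := ‖p (s + 1) - a‖ * ‖p s - a‖⁻¹ with hc
    have hcpos : 0 < c := by
      have h1 : 0 < ‖p (s + 1) - a‖ := norm_pos_iff.2 (hpa (s + 1))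
      have h2 : 0 < ‖p s - a‖ := norm_pos_iff.2 (hpa s)
      positivity
    have h2 : ‖p (s + 1) - a‖ • d (s + 1) = p (s + 1) - a := by
      show ‖p (s + 1) - a‖ • (‖p (s + 1) - a‖⁻¹ • (p (s + 1) - a)) = _
      rw [smul_smul, mul_inv_cancel₀ hn1, one_smul]
    have he : p (s + 1) - a = (-c) • (p s - a) := by
      rw [← h2, hneg]
      show ‖p (s + 1) - a‖ • -(‖p s - a‖⁻¹ • (p s - a)) = (-c) • (p s - a)
      rw [smul_neg, smul_smul, ← hc, ← neg_smul]
    have hden : (0:ℝ) < 1 + c := by linarith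
    refine edge_subset_body s (openEdge_subset s ?_)
    rw [openEdge, openSegment_eq_image']
    refine ⟨(1 + c)⁻¹, ⟨by positivity, ?_⟩, ?_⟩
    · rw [inv_lt_one₀ hden]; linarith
    · show p s + (1 + c)⁻¹ • (p (s + 1) - p s) = a
      have hexp : p (s + 1) - p s = (p (s + 1) - a) - (p s - a) := by abel
      rw [hexp, he]
      match_scalars <;> field_simp <;> ring
  -- angles
  obtain ⟨θ0, hθ0⟩ := cir_surj (hdnorm s)
  have hπ := Real.pi_pos
  obtain ⟨θ1, hθ1lt, hθ1le, hθ1eq⟩ :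
      ∃ θ1, θ0 < θ1 ∧ θ1 ≤ θ0 + 2 * Real.pi ∧ cir θ1 = d (s + 1) := by
    by_cases h01 : d (s + 1) = d s
    · refine ⟨θ0 + 2 * Real.pi, by linarith, le_rfl, ?_⟩
      have := cir_periodic θ0 1
      rw [show ((1:ℤ):ℝ) * (2 * Real.pi) = 2 * Real.pi by push_cast; ring] at this
      rw [this, hθ0, h01]
    · obtain ⟨θ1', hθ1'⟩ := cir_surj (hdnorm (s + 1))
      obtain ⟨k, hk1, hk2⟩ := shift_angle θ0 θ1'
      refine ⟨θ1' + k * (2 * Real.pi), ?_, hk2.le, by rw [cir_periodic, hθ1']⟩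
      rcases lt_or_eq_of_le hk1 with h | h
      · exact h
      · exfalso
        apply h01
        rw [← hθ1', ← hθ0, h, cir_periodic]
  set S : ZMod n → Set ℝ :=
    fun k => {θ | a + hitP p a (cir θ) • cir θ ∈ openEdge p k} with hS_def
  have hSopen : ∀ k, IsOpen (S k) := by
    intro k
    rw [Metric.isOpen_iff]
    intro θ hθ
    obtain ⟨ε, hε, hst⟩ := hit_stable hP hn ha hray (cir_norm θ) hθ
    obtain ⟨δ, hδ, hcd⟩ := Metric.continuous_iff.1 cir_continuous θ ε hε
    exact ⟨δ, hδ, fun θ' hθ' => hst (cir θ') (cir_norm θ') (hcd θ' hθ')⟩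
  have hSdisj : ∀ k k', k ≠ k' → ∀ θ, θ ∈ S k → θ ∈ S k' → False :=
    fun k k' hkk θ h1 h2 => openEdge_disjoint hP hn hkk h1 h2
  have hcov : ∀ θ, θ0 < θ → θ < θ0 + 2 * Real.pi → θ ≠ θ1 → ∃ k, θ ∈ S k := by
    intro θ hgt hlt hne1
    rcases body_classify (hitP_mem (hray _ (cir_norm θ))).2 with ⟨m, hm⟩ | ⟨k, hk⟩
    · exfalso
      rcases hvert2 _ (cir_norm θ) m hm with h | h
      · obtain ⟨k, hk⟩ := cir_eq_iff (show cir θ = cir θ0 by rw [h, ← hθ0])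
        have hb1 : (k:ℝ) * (2 * Real.pi) < 0 := by linarith
        have hb2 : -(2 * Real.pi) < (k:ℝ) * (2 * Real.pi) := by linarith
        have hk1 : (k:ℝ) < 0 := by nlinarith
        have hk2 : (-1:ℝ) < (k:ℝ) := by nlinarith
        have hki1 : k < 0 := by exact_mod_cast hk1
        have hki2 : (-1:ℤ) < k := by exact_mod_cast hk2
        omega
      · obtain ⟨k, hk⟩ := cir_eq_iff (show cir θ = cir θ1 by rw [h, ← hθ1eq])
        have hkne : (k:ℝ) * (2 * Real.pi) ≠ 0 := by
          intro h0
          exact hne1 (by linarith)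
        have hb1 : (k:ℝ) * (2 * Real.pi) < 2 * Real.pi := by linarith
        have hb2 : -(2 * Real.pi) < (k:ℝ) * (2 * Real.pi) := by linarith
        have hk1 : (k:ℝ) < 1 := by nlinarith
        have hk2 : (-1:ℝ) < (k:ℝ) := by nlinarith
        have hki1 : k < 1 := by exact_mod_cast hk1
        have hki2 : (-1:ℤ) < k := by exact_mod_cast hk2
        have hkz : k = 0 := by omega
        rw [hkz] at hkne
        simp at hkne
    · exact ⟨k, hk⟩
  have hcov1 : Ioo θ0 θ1 ⊆ ⋃ k, S k := fun θ hθ =>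
    mem_iUnion.2 (hcov θ hθ.1 (lt_of_lt_of_le hθ.2 hθ1le) (ne_of_lt hθ.2))
  have hmid1 : (θ0 + θ1) / 2 ∈ Ioo θ0 θ1 := ⟨by linarith, by linarith⟩
  obtain ⟨i, hi⟩ := preconn_cover hSopen hSdisj isPreconnected_Ioo hcov1 hmid1
  obtain ⟨j, hj⟩ : ∃ j, Ioo θ1 (θ0 + 2 * Real.pi) ⊆ S j := by
    rcases lt_or_eq_of_le hθ1le with hlt | heq
    · have hcov2 : Ioo θ1 (θ0 + 2 * Real.pi) ⊆ ⋃ k, S k := fun θ hθ =>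
        mem_iUnion.2 (hcov θ (lt_trans hθ1lt hθ.1) hθ.2 (ne_of_gt hθ.1))
      have hmid2 : (θ1 + (θ0 + 2 * Real.pi)) / 2 ∈ Ioo θ1 (θ0 + 2 * Real.pi) :=
        ⟨by linarith, by linarith⟩
      exact preconn_cover hSopen hSdisj isPreconnected_Ioo hcov2 hmid2
    · refine ⟨i, ?_⟩
      rw [← heq, Ioo_self]
      exact empty_subset _
  -- separation
  have hai : a ∉ polyEdge p i := fun h => ha (edge_subset_body i h)
  have haj : a ∉ polyEdge p j := fun h => ha (edge_subset_body j h)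
  obtain ⟨f, tf, hfa, hfx⟩ :=
    geometric_hahn_banach_point_closed (convex_segment _ _)
      (isCompact_seg (p i) (p (i+1))).isClosed hai
  obtain ⟨g, tg, hga, hgx⟩ :=
    geometric_hahn_banach_point_closed (convex_segment _ _)
      (isCompact_seg (p j) (p (j+1))).isClosed haj
  have hfneg : ∃ v, f v < 0 := by
    refine ⟨a - p i, ?_⟩
    rw [map_sub]
    have := hfx (p i) (left_mem_segment ℝ _ _)
    linarith
  have hgneg : ∃ v, g v < 0 := by
    refine ⟨a - p j, ?_⟩
    rw [map_sub]
    have := hgx (p j) (left_mem_segment ℝ _ _)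
    linarith
  obtain ⟨u, hu, hfu, hgu, hud0, hud1⟩ := cone_dir f g hfneg hgneg (d s) (d (s+1)) hd10
  have hlamu : 0 < hitP p a u := hitP_pos (hray u hu) ha
  obtain ⟨θu', hθu'⟩ := cir_surj hu
  obtain ⟨k, hk1, hk2⟩ := shift_angle θ0 θu'
  set θu : ℝ := θu' + k * (2 * Real.pi) with hθu_def
  have hcu : cir θu = u := by rw [cir_periodic, hθu']
  have hθugt : θ0 < θu := by
    rcases lt_or_eq_of_le hk1 with h | h
    · exact h
    · exact absurd (by rw [← hcu, ← h, hθ0] : u = d s) hud0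
  have hθune : θu ≠ θ1 := fun h => hud1 (by rw [← hcu, h, hθ1eq])
  have hqmem : a + hitP p a u • u ∈ openEdge p i ∨ a + hitP p a u • u ∈ openEdge p j := by
    rcases lt_or_gt_of_ne hθune with h | h
    · left
      have := hi (⟨hθugt, h⟩ : θu ∈ Ioo θ0 θ1)
      rw [hS_def] at this
      rw [← hcu]
      exact this
    · right
      have := hj (⟨h, hk2⟩ : θu ∈ Ioo θ1 (θ0 + 2 * Real.pi))
      rw [hS_def] at this
      rw [← hcu]
      exact this
  rcases hqmem with hq | hq
  · have hgt := hfx _ (openEdge_subset i hq)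
    rw [map_add, map_smul, smul_eq_mul] at hgt
    nlinarith [mul_nonpos_of_nonneg_of_nonpos hlamu.le hfu]
  · have hgt := hgx _ (openEdge_subset j hq)
    rw [map_add, map_smul, smul_eq_mul] at hgt
    nlinarith [mul_nonpos_of_nonneg_of_nonpos hlamu.le hgu]
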